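/- Let p be a prime and n ≥ 1 an integer with base-p expansion n = n_r p^r + n_{r-1} p^{r-1} + ⋯ + n_0, where 0 ≤ n_i < p and n_r ≠ 0. Then v_p((2n+1)!) ≤ (2/(p−1))·(n − n_0 − ⋯ − n_r) + r + 1. -/

import Mathlib

theorem padicValNat_two_mul_add_one_factorial_le (p : ℕ) (hp : p.Prime) (n : ℕ)
    (hn : 1 ≤ n) :
    ((padicValNat p (2 * n + 1).factorial : ℚ)) ≤
      2 / ((p : ℚ) - 1) * ((n : ℚ) - ((Nat.digits p n).sum : ℚ)) +
        ((Nat.log p n : ℚ)) + 1 := by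
  haveI : Fact p.Prime := ⟨hp⟩
  have hp1 : 1 < p := hp.one_lt
  set r := Nat.log p n with hr
  -- bound on log of 2n+1
  have hnp : n < p ^ (r + 1) := Nat.lt_pow_succ_log_self hp1 n
  have h2n : 2 * n + 1 < p ^ (r + 2) := by
    calc 2 * n + 1 < 2 * p ^ (r + 1) := by omega
    _ ≤ p * p ^ (r + 1) := Nat.mul_le_mul_right _ hp1
    _ = p ^ (r + 2) := by ring
  have hlog2 : Nat.log p (2 * n + 1) < r + 2 := Nat.log_lt_of_lt_pow (by omega) h2n
  -- Legendre sums
  have hL1 : padicValNat p (2 * n + 1).factorial =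
      ∑ i ∈ Finset.Ico 1 (r + 2), (2 * n + 1) / p ^ i := padicValNat_factorial hlog2
  have hL2 : padicValNat p n.factorial = ∑ i ∈ Finset.Ico 1 (r + 2), n / p ^ i :=
    padicValNat_factorial (by omega)
  -- termwise bound
  have key : padicValNat p (2 * n + 1).factorial ≤ 2 * padicValNat p n.factorial + (r + 1) := by
    rw [hL1, hL2]
    have hterm : ∀ i ∈ Finset.Ico 1 (r + 2), (2 * n + 1) / p ^ i ≤ 2 * (n / p ^ i) + 1 := by
      intro i _
      have hq : 0 < p ^ i := Nat.pow_pos (by omega)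
      have hmod := Nat.div_add_mod n (p ^ i)
      have hmlt : n % p ^ i < p ^ i := Nat.mod_lt n hq
      have : (2 * n + 1) / p ^ i < 2 * (n / p ^ i) + 2 := by
        rw [Nat.div_lt_iff_lt_mul hq]
        nlinarith
      omega
    calc ∑ i ∈ Finset.Ico 1 (r + 2), (2 * n + 1) / p ^ i
        ≤ ∑ i ∈ Finset.Ico 1 (r + 2), (2 * (n / p ^ i) + 1) := Finset.sum_le_sum hterm
      _ = 2 * ∑ i ∈ Finset.Ico 1 (r + 2), n / p ^ i + (r + 1) := by
          rw [Finset.sum_add_distrib, ← Finset.mul_sum, Finset.sum_const, Nat.card_Ico]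
          simp
  -- Legendre digit-sum formula
  have hdig : (p - 1) * padicValNat p n.factorial = n - (Nat.digits p n).sum :=
    sub_one_mul_padicValNat_factorial n
  have hsle : (Nat.digits p n).sum ≤ n := Nat.digit_sum_le p n
  -- cast to ℚ
  have hdigQ : ((p : ℚ) - 1) * (padicValNat p n.factorial : ℚ) =
      (n : ℚ) - ((Nat.digits p n).sum : ℚ) := by
    calc ((p : ℚ) - 1) * (padicValNat p n.factorial : ℚ)
        = (((p - 1) * padicValNat p n.factorial : ℕ) : ℚ) := by
          push_cast [Nat.cast_sub hp1.le]; ring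
      _ = ((n - (Nat.digits p n).sum : ℕ) : ℚ) := by rw [hdig]
      _ = (n : ℚ) - ((Nat.digits p n).sum : ℚ) := by rw [Nat.cast_sub hsle]
  have hpQ : (p : ℚ) - 1 > 0 := by
    have : (2 : ℚ) ≤ (p : ℚ) := by exact_mod_cast hp.two_le
    linarith
  have hkeyQ : (padicValNat p (2 * n + 1).factorial : ℚ) ≤
      2 * (padicValNat p n.factorial : ℚ) + (r : ℚ) + 1 := by
    have := (Nat.cast_le (α := ℚ)).2 key
    push_cast at this
    linarith
  have : 2 / ((p : ℚ) - 1) * ((n : ℚ) - ((Nat.digits p n).sum : ℚ)) =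
      2 * (padicValNat p n.factorial : ℚ) := by
    rw [← hdigQ]
    field_simp
  rw [this]
  exact hkeyQ
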